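/- The operator L_2 := Σ_{α=1}^{n} Σ_{p≥0} (p + 1/2 + μ_α)(p + 3/2 + μ_α)(p + 5/2 + μ_α)·T^{α,p}∘∂_{α,p+2} + Σ_{α,β=1}^{n} η^{αβ}·(1/2 − μ_α)(1/2 − μ_β)(3/2 − μ_β)·∂_{α,1}∘∂_{β,0} equals V_2 as a linear operator on P. (This is the case j = 2 of the coincidence of the Virasoro operators of the Frobenius manifold of the Coxeter group D_n, expressed in the rescaled time variables, with the operators V_j obtained from vertex operators of the two-component BKP hierarchy.) -/

import Mathlib

open MvPolynomial

noncomputable section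

/-- The polynomial algebra over ℚ in variables `t_{2m+1}` (index `(false, m)`) and
`t̂_{2m+1}` (index `(true, m)`). -/
abbrev PP : Type := MvPolynomial (Bool × ℕ) ℚ

/-- The operator `p_k` (for `b = false`) resp. `p̂_k` (for `b = true`):
`2·∂/∂t_k` for odd positive `k`, multiplication by `(-k)·t_{-k}` for odd negative `k`,
and `0` for even `k`. -/
def pOp (b : Bool) (k : ℤ) : PP → PP := fun q =>
  if 0 < k ∧ Odd k then (2 : ℚ) • pderiv (b, (k.toNat - 1) / 2) q
  else if k < 0 ∧ Odd k then ((-k : ℤ) : ℚ) • (X (b, ((-k).toNat - 1) / 2) * q)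
  else 0

/-- The normal-ordered product `:p_a p_c:`, equal to `p_c ∘ p_a` if `a > 0 > c`
and `p_a ∘ p_c` otherwise. -/
def nord (b : Bool) (a c : ℤ) : PP → PP :=
  if 0 < a ∧ c < 0 then fun q => pOp b c (pOp b a q) else fun q => pOp b a (pOp b c q)

/-- The Virasoro operator
`V_j = (1/(8n-8))·Σ_{i∈ℤ} :p_i p_{(2n-2)j-i}: + (1/8)·Σ_{i∈ℤ} :p̂_i p̂_{2j-i}:
+ δ_{j,0}·(n/24)·(1 + 1/(2n-2))·Id`, acting pointwise (on each polynomial only finitely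
many summands act nontrivially). -/
def Vop (n : ℕ) (j : ℤ) : PP → PP := fun q =>
  (8 * (n : ℚ) - 8)⁻¹ • (∑ᶠ i : ℤ, nord false i ((2 * (n : ℤ) - 2) * j - i) q)
  + (8 : ℚ)⁻¹ • (∑ᶠ i : ℤ, nord true i (2 * j - i) q)
  + (if j = 0 then (n : ℚ) / 24 * (1 + (2 * (n : ℚ) - 2)⁻¹) else 0) • q

/-- For `α ∈ {1,…,n}`, the spectrum `μ_α = (2α-n)/(2n-2)` for `α ≤ n-1` and `μ_n = 0`. -/
def mu (n α : ℕ) : ℚ :=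
  if α = n then 0 else (2 * (α : ℚ) - n) / (2 * (n : ℚ) - 2)

/-- The rescaling constants: `c_{α,p} = (2n-2)·∏_{r=0}^{p}((2α-1)/(2n-2)+r)` for
`α ≤ n-1` and `c_{n,p} = 2·∏_{r=0}^{p}(1/2+r)`. -/
def cc (n α p : ℕ) : ℚ :=
  if α = n then 2 * ∏ r ∈ Finset.range (p + 1), ((1 : ℚ) / 2 + r)
  else (2 * (n : ℚ) - 2) * ∏ r ∈ Finset.range (p + 1), ((2 * (α : ℚ) - 1) / (2 * (n : ℚ) - 2) + r)

/-- The variable corresponding to the time `T^{α,p}`: the variable `t_{(2n-2)p+2α-1}`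
(index `(false, (n-1)p+α-1)`) if `α ≤ n-1`, and `t̂_{2p+1}` (index `(true, p)`) if `α = n`. -/
def vIdx (n α p : ℕ) : Bool × ℕ :=
  if α = n then (true, p) else (false, (n - 1) * p + α - 1)

/-- The operator `T^{α,p}`: multiplication by the rescaled time variable `c_{α,p}·t`. -/
def Tmul (n α p : ℕ) : PP → PP := fun q => cc n α p • (X (vIdx n α p) * q)

/-- The operator `∂_{α,p} = c_{α,p}⁻¹·∂/∂t`, the derivative in the rescaled time variable. -/
def Dop (n α p : ℕ) : PP → PP := fun q => (cc n α p)⁻¹ • pderiv (vIdx n α p) q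

/-- The flat metric: `η_{αβ} = 1/(4n-4)` if `α+β = n`, `η_{nn} = 1/4`, and `0` otherwise. -/
def eta (n α β : ℕ) : ℚ :=
  if α + β = n then (4 * (n : ℚ) - 4)⁻¹ else if α = n ∧ β = n then (4 : ℚ)⁻¹ else 0

/-- The inverse metric: `η^{αβ} = 4n-4` if `α+β = n`, `η^{nn} = 4`, and `0` otherwise. -/
def etaInv (n α β : ℕ) : ℚ :=
  if α + β = n then 4 * (n : ℚ) - 4 else if α = n ∧ β = n then 4 else 0

-- pderiv commutes
lemma pderiv_comm' {σ : Type*} (i j : σ) (p : MvPolynomial σ ℚ) :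
    pderiv i (pderiv j p) = pderiv j (pderiv i p) := by
  classical
  induction p using MvPolynomial.induction_on' with
  | monomial s a =>
    simp only [pderiv_monomial]
    rcases eq_or_ne i j with rfl | hij
    · rfl
    · have h3 : s - Finsupp.single j 1 - Finsupp.single i 1
          = s - Finsupp.single i 1 - Finsupp.single j 1 := by
        rw [tsub_tsub, tsub_tsub, add_comm]
      rw [h3]
      congr 1
      simp only [Finsupp.tsub_apply, Finsupp.single_apply]
      rw [if_neg (fun h : j = i => hij h.symm), if_neg hij]
      simp only [Nat.sub_zero]
      ring
  | add p q hp hq => simp [hp, hq]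

def dBound (q : PP) : ℕ := q.vars.sup Prod.snd

lemma pderiv_high {q : PP} {b : Bool} {t : ℕ} (ht : dBound q < t) : pderiv (b, t) q = 0 := by
  apply pderiv_eq_zero_of_notMem_vars
  intro h
  have := Finset.le_sup (f := Prod.snd) h
  exact absurd this (by simpa [dBound] using ht.not_ge)

lemma pOp_zero (b : Bool) (k : ℤ) : pOp b k 0 = 0 := by
  unfold pOp
  split
  · simp
  · split <;> simp

lemma pOp_not_odd {k : ℤ} (h : ¬ Odd k) (b : Bool) (q : PP) : pOp b k q = 0 := by
  unfold pOp
  rw [if_neg (by tauto), if_neg (by tauto)]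

lemma pOp_pos (b : Bool) (j : ℕ) (q : PP) :
    pOp b (2 * (j : ℤ) + 1) q = (2 : ℚ) • pderiv (b, j) q := by
  unfold pOp
  rw [if_pos ⟨by positivity, ⟨(j : ℤ), by ring⟩⟩]
  have h2 : ((2 * (j : ℤ) + 1).toNat - 1) / 2 = j := by omega
  rw [h2]

lemma pOp_neg (b : Bool) (j : ℕ) (q : PP) :
    pOp b (-(2 * (j : ℤ) + 1)) q = ((2 * (j : ℚ) + 1)) • (X (b, j) * q) := by
  unfold pOp
  rw [if_neg (by omega), if_pos ⟨by omega, ⟨-((j:ℤ)+1), by ring⟩⟩]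
  have h1 : ((-(-(2 * (j : ℤ) + 1)) : ℤ) : ℚ) = 2 * (j:ℚ) + 1 := by push_cast; ring
  have h2 : ((-(-(2 * (j : ℤ) + 1))).toNat - 1) / 2 = j := by omega
  rw [h1, h2]

def XD (b : Bool) (m : ℕ) (q : PP) (j : ℕ) : PP := X (b, j) * pderiv (b, j + m) q

lemma nord_even {i : ℤ} (hi : ¬ Odd i) (b : Bool) (c : ℤ) (q : PP) : nord b i c q = 0 := by
  unfold nord
  split
  · show pOp b c (pOp b i q) = 0
    rw [pOp_not_odd hi, pOp_zero]
  · show pOp b i (pOp b c q) = 0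
    rw [pOp_not_odd hi]

lemma nord_neg (b : Bool) (m j : ℕ) (q : PP) :
    nord b (-(2 * (j : ℤ) + 1)) (2 * (m : ℤ) - -(2 * (j : ℤ) + 1)) q
      = (2 * (2 * (j : ℚ) + 1)) • XD b m q j := by
  unfold nord
  rw [if_neg (by omega)]
  have e : (2 * (m : ℤ) - -(2 * (j : ℤ) + 1)) = 2 * ((j + m : ℕ) : ℤ) + 1 := by push_cast; ring
  rw [e, pOp_pos, pOp_neg]
  rw [mul_smul_comm, smul_smul, XD]
  ring_nf

lemma nord_pos (b : Bool) (m j : ℕ) (q : PP) :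
    nord b (2 * (m : ℤ) + (2 * (j : ℤ) + 1)) (2 * (m : ℤ) - (2 * (m : ℤ) + (2 * (j : ℤ) + 1))) q
      = (2 * (2 * (j : ℚ) + 1)) • XD b m q j := by
  unfold nord
  rw [if_pos ⟨by omega, by omega⟩]
  have e1 : (2 * (m : ℤ) + (2 * (j : ℤ) + 1)) = 2 * ((j + m : ℕ) : ℤ) + 1 := by push_cast; ring
  have e2 : (2 * (m : ℤ) - (2 * (m : ℤ) + (2 * (j : ℤ) + 1))) = -(2 * (j : ℤ) + 1) := by ring
  rw [e2, e1, pOp_pos, pOp_neg]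
  rw [mul_smul_comm, smul_smul, XD]
  ring_nf

lemma nord_mid (b : Bool) (m s : ℕ) (hs : s < m) (q : PP) :
    nord b (2 * (s : ℤ) + 1) (2 * (m : ℤ) - (2 * (s : ℤ) + 1)) q
      = (4 : ℚ) • pderiv (b, s) (pderiv (b, m - 1 - s) q) := by
  unfold nord
  rw [if_neg (by omega)]
  have e : (2 * (m : ℤ) - (2 * (s : ℤ) + 1)) = 2 * ((m - 1 - s : ℕ) : ℤ) + 1 := by omega
  rw [e, pOp_pos, pOp_pos]
  rw [Derivation.map_smul, smul_smul]
  norm_num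

lemma finsum_eq_range {M : Type*} [AddCommMonoid M] (f : ℕ → M) (K : ℕ)
    (h : ∀ j, K ≤ j → f j = 0) : ∑ᶠ j, f j = ∑ j ∈ Finset.range K, f j := by
  apply finsum_eq_sum_of_support_subset
  intro j hj
  simp only [Finset.coe_range, Set.mem_Iio]
  by_contra hc
  exact hj (h j (by omega))

lemma finsum_nord (b : Bool) (m : ℕ) (hm : 0 < m) (q : PP) :
    ∑ᶠ i : ℤ, nord b i (2 * (m : ℤ) - i) q
      = (∑ j ∈ Finset.range (dBound q + 1), (4 * (2 * (j : ℚ) + 1)) • XD b m q j)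
        + ∑ s ∈ Finset.range m, (4 : ℚ) • pderiv (b, s) (pderiv (b, m - 1 - s) q) := by
  classical
  set D := dBound q + 1 with hD
  have XD_high : ∀ j, D ≤ j → XD b m q j = 0 := by
    intro j hj
    have : pderiv (b, j + m) q = 0 := pderiv_high (by omega)
    simp [XD, this]
  set i1 : ℕ → ℤ := fun j => -(2 * (j : ℤ) + 1) with hi1
  set i2 : ℕ → ℤ := fun j => 2 * (m : ℤ) + (2 * (j : ℤ) + 1) with hi2
  set i3 : ℕ → ℤ := fun s => 2 * (s : ℤ) + 1 with hi3
  set T : Finset ℤ :=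
    ((Finset.range D).image i1 ∪ (Finset.range D).image i2) ∪ (Finset.range m).image i3 with hT
  have hsupp : Function.support (fun i => nord b i (2 * (m : ℤ) - i) q) ⊆ ↑T := by
    intro i hi
    simp only [Function.mem_support] at hi
    rcases Int.even_or_odd i with he | ho
    · exact absurd (nord_even (by rwa [← Int.not_odd_iff_even] at he) b _ q) hi
    simp only [hT, Finset.coe_union, Set.mem_union, Finset.coe_image, Set.mem_image,
      Finset.mem_coe, Finset.mem_range]
    rcases lt_trichotomy i 0 with h1 | h1 | h1
    · left; left
      obtain ⟨k, hk⟩ := ho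
      set j : ℕ := (-k - 1).toNat with hj
      have hij : i = i1 j := by simp only [hi1]; omega
      refine ⟨j, ?_, hij.symm⟩
      by_contra hc
      apply hi
      rw [hij, hi1]
      simp only
      rw [nord_neg b m j q, XD_high j (by omega), smul_zero]
    · exact absurd (nord_even (by simp [h1]) b _ q) hi
    rcases lt_or_ge i (2 * (m : ℤ)) with h2 | h2
    · right
      obtain ⟨k, hk⟩ := ho
      set s : ℕ := k.toNat with hs
      exact ⟨s, by omega, by simp only [hi3]; omega⟩
    · left; right
      obtain ⟨k, hk⟩ := ho
      set j : ℕ := (k - m).toNat with hj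
      have hij : i = i2 j := by simp only [hi2]; omega
      refine ⟨j, ?_, hij.symm⟩
      by_contra hc
      apply hi
      rw [hij, hi2]
      simp only
      rw [nord_pos b m j q, XD_high j (by omega), smul_zero]
  rw [finsum_eq_sum_of_support_subset _ hsupp]
  have hdis1 : Disjoint ((Finset.range D).image i1) ((Finset.range D).image i2) := by
    rw [Finset.disjoint_left]
    intro x hx hx2
    obtain ⟨a, _, ha⟩ := Finset.mem_image.1 hx
    obtain ⟨c, _, hc⟩ := Finset.mem_image.1 hx2
    simp only [hi1, hi2] at ha hc
    omega
  have hdis2 : Disjoint ((Finset.range D).image i1 ∪ (Finset.range D).image i2)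
      ((Finset.range m).image i3) := by
    rw [Finset.disjoint_left]
    intro x hx hx3
    obtain ⟨c, hcm, hc⟩ := Finset.mem_image.1 hx3
    rcases Finset.mem_union.1 hx with hx1 | hx2
    · obtain ⟨a, _, ha⟩ := Finset.mem_image.1 hx1
      simp only [hi1, hi3] at ha hc
      omega
    · obtain ⟨a, _, ha⟩ := Finset.mem_image.1 hx2
      simp only [hi2, hi3] at ha hc
      simp only [Finset.mem_range] at hcm
      omega
  rw [hT, Finset.sum_union hdis2, Finset.sum_union hdis1]
  have inj1 : ∀ x ∈ Finset.range D, ∀ y ∈ Finset.range D, i1 x = i1 y → x = y := by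
    intro x _ y _ h; simp only [hi1] at h; omega
  have inj2 : ∀ x ∈ Finset.range D, ∀ y ∈ Finset.range D, i2 x = i2 y → x = y := by
    intro x _ y _ h; simp only [hi2] at h; omega
  have inj3 : ∀ x ∈ Finset.range m, ∀ y ∈ Finset.range m, i3 x = i3 y → x = y := by
    intro x _ y _ h; simp only [hi3] at h; omega
  rw [Finset.sum_image inj1, Finset.sum_image inj2, Finset.sum_image inj3]
  have e1 : ∀ j ∈ Finset.range D, nord b (i1 j) (2 * (m : ℤ) - i1 j) q
      = (2 * (2 * (j : ℚ) + 1)) • XD b m q j := fun j _ => nord_neg b m j q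
  have e2 : ∀ j ∈ Finset.range D, nord b (i2 j) (2 * (m : ℤ) - i2 j) q
      = (2 * (2 * (j : ℚ) + 1)) • XD b m q j := fun j _ => nord_pos b m j q
  have e3 : ∀ s ∈ Finset.range m, nord b (i3 s) (2 * (m : ℤ) - i3 s) q
      = (4 : ℚ) • pderiv (b, s) (pderiv (b, m - 1 - s) q) := by
    intro s hs
    exact nord_mid b m s (Finset.mem_range.1 hs) q
  rw [Finset.sum_congr rfl e1, Finset.sum_congr rfl e2, Finset.sum_congr rfl e3]
  rw [← Finset.sum_add_distrib]
  congr 1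
  apply Finset.sum_congr rfl
  intro j _
  rw [← add_smul]
  ring_nf

lemma XD_high (b : Bool) (m : ℕ) (q : PP) (j : ℕ) (hj : dBound q + 1 ≤ j) :
    XD b m q j = 0 := by
  have : pderiv (b, j + m) q = 0 := pderiv_high (by omega)
  simp [XD, this]

lemma Ncast (n : ℕ) (hn : 3 ≤ n) : (3:ℚ) ≤ (n:ℚ) := by exact_mod_cast hn

lemma cc_pos_n (n p : ℕ) : 0 < cc n n p := by
  unfold cc
  rw [if_pos rfl]
  refine mul_pos two_pos (Finset.prod_pos fun r _ => by positivity)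

lemma cc_pos_a (n α p : ℕ) (hn : 3 ≤ n) (h1 : 1 ≤ α) (hne : α ≠ n) : 0 < cc n α p := by
  have hq := Ncast n hn
  have hA : (0:ℚ) < 2 * (α:ℚ) - 1 := by
    have : (1:ℚ) ≤ (α:ℚ) := by exact_mod_cast h1
    linarith
  have hN : (0:ℚ) < 2 * (n:ℚ) - 2 := by linarith
  unfold cc
  rw [if_neg hne]
  refine mul_pos hN (Finset.prod_pos fun r _ => ?_)
  have := div_pos hA hN
  have : (0:ℚ) ≤ (r:ℚ) := Nat.cast_nonneg r
  positivity

lemma cc_step2_n (n p : ℕ) :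
    cc n n (p + 2) = cc n n p * ((1:ℚ)/2 + ((p:ℚ)+1)) * ((1:ℚ)/2 + ((p:ℚ)+2)) := by
  unfold cc
  rw [if_pos rfl, if_pos rfl]
  rw [show p + 2 + 1 = (p + 1) + 1 + 1 from rfl, Finset.prod_range_succ, Finset.prod_range_succ]
  push_cast
  ring

lemma cc_step2_a (n α p : ℕ) (hne : α ≠ n) :
    cc n α (p + 2) = cc n α p * ((2*(α:ℚ)-1)/(2*(n:ℚ)-2) + ((p:ℚ)+1))
      * ((2*(α:ℚ)-1)/(2*(n:ℚ)-2) + ((p:ℚ)+2)) := by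
  unfold cc
  rw [if_neg hne, if_neg hne]
  rw [show p + 2 + 1 = (p + 1) + 1 + 1 from rfl, Finset.prod_range_succ, Finset.prod_range_succ]
  push_cast
  ring

lemma term_n (n p : ℕ) (q : PP) :
    (((p : ℚ) + 1/2 + mu n n) * ((p : ℚ) + 3/2 + mu n n) * ((p : ℚ) + 5/2 + mu n n)) •
      Tmul n n p (Dop n n (p + 2) q)
    = ((2 * (p : ℚ) + 1) / 2) • XD true 2 q p := by
  unfold Tmul Dop vIdx mu XD
  simp only [eq_self_iff_true, if_true]
  rw [mul_smul_comm, smul_smul, smul_smul]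
  congr 1
  have h0 : (0:ℚ) < cc n n p := cc_pos_n n p
  have hf1 : ((1:ℚ)/2 + ((p:ℚ)+1)) ≠ 0 := by positivity
  have hf2 : ((1:ℚ)/2 + ((p:ℚ)+2)) ≠ 0 := by positivity
  rw [cc_step2_n]
  rw [add_zero, add_zero, add_zero]
  field_simp
  ring

lemma term_a (n α p : ℕ) (hn : 3 ≤ n) (h1 : 1 ≤ α) (h2 : α ≤ n - 1) (q : PP) :
    (((p : ℚ) + 1/2 + mu n α) * ((p : ℚ) + 3/2 + mu n α) * ((p : ℚ) + 5/2 + mu n α)) •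
      Tmul n α p (Dop n α (p + 2) q)
    = ((2 * (((n-1)*p + α - 1 : ℕ) : ℚ) + 1) / (2 * (n:ℚ) - 2)) •
        XD false (2*n-2) q ((n-1)*p + α - 1) := by
  have hne : α ≠ n := by omega
  have hq := Ncast n hn
  have hidx : (n-1)*(p+2) + α - 1 = ((n-1)*p + α - 1) + (2*n-2) := by
    have h := Nat.mul_add (n-1) p 2
    omega
  unfold Tmul Dop vIdx mu XD
  simp only [if_neg hne]
  rw [hidx]
  rw [mul_smul_comm, smul_smul, smul_smul]
  congr 1
  have h0 : (0:ℚ) < cc n α p := cc_pos_a n α p hn h1 hne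
  have hA : (0:ℚ) < 2 * (α:ℚ) - 1 := by
    have : (1:ℚ) ≤ (α:ℚ) := by exact_mod_cast h1
    linarith
  have hN : (0:ℚ) < 2 * (n:ℚ) - 2 := by linarith
  have hf1 : (2*(α:ℚ)-1)/(2*(n:ℚ)-2) + ((p:ℚ)+1) ≠ 0 := by
    have := div_pos hA hN
    positivity
  have hf2 : (2*(α:ℚ)-1)/(2*(n:ℚ)-2) + ((p:ℚ)+2) ≠ 0 := by
    have := div_pos hA hN
    positivity
  have hcast : (((n-1)*p + α - 1 : ℕ) : ℚ) = ((n:ℚ)-1) * (p:ℚ) + (α:ℚ) - 1 := by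
    have e : (n-1)*p + α - 1 = (n-1)*p + (α-1) := by omega
    rw [e, Nat.cast_add, Nat.cast_mul, Nat.cast_sub (show 1 ≤ n by omega),
      Nat.cast_sub h1, Nat.cast_one]
    ring
  rw [cc_step2_a n α p hne, hcast]
  have hN' : (2 * (n:ℚ) - 2) ≠ 0 := by linarith
  have hn1' : ((n:ℚ) - 1) ≠ 0 := by linarith
  have h0' : cc n α p ≠ 0 := h0.ne'
  have hg1 : 2*(α:ℚ)-1 + 2*((n:ℚ)-1)*((p:ℚ)+1) ≠ 0 := by nlinarith
  have hg2 : 2*(α:ℚ)-1 + 2*((n:ℚ)-1)*((p:ℚ)+2) ≠ 0 := by nlinarith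
  field_simp
  ring

lemma sum_term_n (n : ℕ) (q : PP) :
    (∑ᶠ p : ℕ, (((p : ℚ) + 1/2 + mu n n) * ((p : ℚ) + 3/2 + mu n n) * ((p : ℚ) + 5/2 + mu n n)) •
        Tmul n n p (Dop n n (p + 2) q))
    = ∑ j ∈ Finset.range (dBound q + 1), ((2 * (j : ℚ) + 1) / 2) • XD true 2 q j := by
  rw [finsum_congr (fun p => term_n n p q)]
  exact finsum_eq_range _ _ (fun j hj => by rw [XD_high true 2 q j hj, smul_zero])

lemma sum_term_a (n : ℕ) (hn : 3 ≤ n) (q : PP) :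
    (∑ α ∈ Finset.Icc 1 (n-1), ∑ᶠ p : ℕ,
        (((p : ℚ) + 1/2 + mu n α) * ((p : ℚ) + 3/2 + mu n α) * ((p : ℚ) + 5/2 + mu n α)) •
          Tmul n α p (Dop n α (p + 2) q))
    = ∑ j ∈ Finset.range (dBound q + 1),
        ((2 * (j : ℚ) + 1) / (2 * (n:ℚ) - 2)) • XD false (2*n-2) q j := by
  set D := dBound q + 1 with hD
  have step1 : ∀ α ∈ Finset.Icc 1 (n-1),
      (∑ᶠ p : ℕ, (((p : ℚ) + 1/2 + mu n α) * ((p : ℚ) + 3/2 + mu n α) *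
          ((p : ℚ) + 5/2 + mu n α)) • Tmul n α p (Dop n α (p + 2) q))
      = ∑ p ∈ Finset.range D, ((2 * ((((n-1)*p + α - 1 : ℕ)) : ℚ) + 1) / (2 * (n:ℚ) - 2)) •
          XD false (2*n-2) q ((n-1)*p + α - 1) := by
    intro α hα
    obtain ⟨h1, h2⟩ := Finset.mem_Icc.1 hα
    rw [finsum_congr (fun p => term_a n α p hn h1 h2 q)]
    apply finsum_eq_range
    intro p hp
    have hle : p ≤ (n-1) * p := Nat.le_mul_of_pos_left p (by omega)
    rw [XD_high false (2*n-2) q _ (by omega), smul_zero]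
  rw [Finset.sum_congr rfl step1, ← Finset.sum_product']
  have hmain : (∑ x ∈ (Finset.Icc 1 (n-1)) ×ˢ (Finset.range D),
      ((2 * ((((n-1)*x.2 + x.1 - 1 : ℕ)) : ℚ) + 1) / (2 * (n:ℚ) - 2)) •
        XD false (2*n-2) q ((n-1)*x.2 + x.1 - 1))
      = ∑ j ∈ Finset.range ((n-1) * D),
        ((2 * (j : ℚ) + 1) / (2 * (n:ℚ) - 2)) • XD false (2*n-2) q j := by
    apply Finset.sum_nbij' (i := fun x : ℕ × ℕ => (n-1) * x.2 + x.1 - 1)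
      (j := fun k => (k % (n-1) + 1, k / (n-1)))
    · intro x hx
      obtain ⟨hx1, hx2⟩ := Finset.mem_product.1 hx
      obtain ⟨ha1, ha2⟩ := Finset.mem_Icc.1 hx1
      have hp2 := Finset.mem_range.1 hx2
      have h6 : (n-1) * x.2 + (n-1) * 1 ≤ (n-1) * D := by
        rw [← Nat.mul_add]
        exact Nat.mul_le_mul_left _ (by omega)
      simp only [Finset.mem_range]
      omega
    · intro k hk
      have hk' := Finset.mem_range.1 hk
      have h3 : 0 < n - 1 := by
        rcases Nat.eq_zero_or_pos (n-1) with h | h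
        · rw [h] at hk'; omega
        · exact h
      have hmod := Nat.mod_lt k h3
      have hdiv : k / (n-1) < D := by
        apply (Nat.div_lt_iff_lt_mul h3).2
        rw [Nat.mul_comm] at hk'
        exact hk'
      simp only [Finset.mem_product, Finset.mem_Icc, Finset.mem_range]
      omega
    · intro x hx
      obtain ⟨hx1, _⟩ := Finset.mem_product.1 hx
      obtain ⟨ha1, ha2⟩ := Finset.mem_Icc.1 hx1
      have h3 : 0 < n - 1 := by omega
      have e : (n-1) * x.2 + x.1 - 1 = (x.1 - 1) + x.2 * (n-1) := by
        rw [Nat.mul_comm]; omega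
      rw [e, Nat.add_mul_mod_self_right, Nat.add_mul_div_right _ _ h3,
        Nat.mod_eq_of_lt (by omega), Nat.div_eq_of_lt (by omega)]
      ext <;> simp <;> omega
    · intro k hk
      have := Nat.div_add_mod k (n-1)
      simp only
      omega
    · intro x hx
      rfl
  rw [hmain]
  refine (Finset.sum_subset (Finset.range_subset_range.2 (Nat.le_mul_of_pos_left D (by
    rcases Nat.eq_zero_or_pos (n-1) with h | h
    · omega
    · exact h))) ?_).symm
  intro j hj hj2
  rw [XD_high false (2*n-2) q j (by simp only [Finset.mem_range] at hj2 ⊢; omega), smul_zero]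

lemma eta_nn (n : ℕ) (hn : 3 ≤ n) (q : PP) :
    (∑ β ∈ Finset.Icc 1 n, (etaInv n n β * (1/2 - mu n n) * (1/2 - mu n β) * (3/2 - mu n β)) •
        Dop n n 1 (Dop n β 0 q))
      = pderiv (true, 1) (pderiv (true, 0) q) := by
  have hz : ∀ β ∈ Finset.Icc 1 n, β ≠ n →
      (etaInv n n β * (1/2 - mu n n) * (1/2 - mu n β) * (3/2 - mu n β)) •
        Dop n n 1 (Dop n β 0 q) = 0 := by
    intro β hβ hne
    obtain ⟨hb1, hb2⟩ := Finset.mem_Icc.1 hβ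
    have h0 : etaInv n n β = 0 := by
      unfold etaInv
      rw [if_neg (by omega), if_neg (by tauto)]
    rw [h0]
    simp
  rw [Finset.sum_eq_single_of_mem n (Finset.mem_Icc.2 ⟨by omega, le_refl n⟩) hz]
  have he : etaInv n n n = 4 := by
    unfold etaInv
    rw [if_neg (by omega), if_pos ⟨rfl, rfl⟩]
  have hc0 : cc n n 0 = 1 := by
    unfold cc
    rw [if_pos rfl, Finset.prod_range_one]
    norm_num
  have hc1 : cc n n 1 = 3/2 := by
    unfold cc
    rw [if_pos rfl, Finset.prod_range_succ, Finset.prod_range_one]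
    norm_num
  unfold Dop vIdx mu
  simp only [eq_self_iff_true, if_true]
  rw [he, hc0, hc1, Derivation.map_smul, smul_smul, smul_smul]
  norm_num

lemma eta_a (n α : ℕ) (hn : 3 ≤ n) (h1 : 1 ≤ α) (h2 : α ≤ n - 1) (q : PP) :
    (∑ β ∈ Finset.Icc 1 n, (etaInv n α β * (1/2 - mu n α) * (1/2 - mu n β) * (3/2 - mu n β)) •
        Dop n α 1 (Dop n β 0 q))
      = ((n:ℚ) - 1)⁻¹ • pderiv (false, n + α - 2) (pderiv (false, n - α - 1) q) := by
  have hq := Ncast n hn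
  have hne : α ≠ n := by omega
  have hne2 : n - α ≠ n := by omega
  have hz : ∀ β ∈ Finset.Icc 1 n, β ≠ n - α →
      (etaInv n α β * (1/2 - mu n α) * (1/2 - mu n β) * (3/2 - mu n β)) •
        Dop n α 1 (Dop n β 0 q) = 0 := by
    intro β hβ hneb
    obtain ⟨hb1, hb2⟩ := Finset.mem_Icc.1 hβ
    have h0 : etaInv n α β = 0 := by
      unfold etaInv
      rw [if_neg (by omega), if_neg (by rintro ⟨rfl, rfl⟩; omega)]
    rw [h0]
    simp
  rw [Finset.sum_eq_single_of_mem (n - α) (Finset.mem_Icc.2 ⟨by omega, by omega⟩) hz]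
  have he : etaInv n α (n - α) = 4 * (n:ℚ) - 4 := by
    unfold etaInv
    rw [if_pos (by omega)]
  unfold Dop vIdx mu
  simp only [if_neg hne, if_neg hne2]
  have e1 : (n-1) * 1 + α - 1 = n + α - 2 := by omega
  have e2 : (n-1) * 0 + (n - α) - 1 = n - α - 1 := by omega
  rw [e1, e2, he, Derivation.map_smul, smul_smul, smul_smul]
  congr 1
  have hA : (0:ℚ) < 2 * (α:ℚ) - 1 := by
    have : (1:ℚ) ≤ (α:ℚ) := by exact_mod_cast h1
    linarith
  have hN : (0:ℚ) < 2 * (n:ℚ) - 2 := by linarith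
  have hcast : ((n - α : ℕ) : ℚ) = (n:ℚ) - (α:ℚ) := by
    rw [Nat.cast_sub (by omega)]
  have hc1 : cc n α 1 = (2 * (n:ℚ) - 2) * ((2*(α:ℚ)-1)/(2*(n:ℚ)-2))
      * ((2*(α:ℚ)-1)/(2*(n:ℚ)-2) + 1) := by
    unfold cc
    rw [if_neg hne, Finset.prod_range_succ, Finset.prod_range_one]
    push_cast
    ring
  have hc0 : cc n (n - α) 0 = (2 * (n:ℚ) - 2) * ((2*((n:ℚ)-(α:ℚ))-1)/(2*(n:ℚ)-2)) := by
    unfold cc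
    rw [if_neg hne2, Finset.prod_range_one, hcast]
    push_cast
    ring
  have hB : (0:ℚ) < 2 * ((n:ℚ)-(α:ℚ)) - 1 := by
    have : (α:ℚ) ≤ (n:ℚ) - 1 := by
      have : (α:ℕ) ≤ n - 1 := h2
      have h3 : ((α:ℕ):ℚ) ≤ ((n-1 : ℕ):ℚ) := by exact_mod_cast this
      rwa [Nat.cast_sub (by omega), Nat.cast_one] at h3
    linarith
  rw [hc1, hc0, hcast]
  have hAN : (2*(α:ℚ)-1)/(2*(n:ℚ)-2) + 1 ≠ 0 := by
    have := div_pos hA hN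
    positivity
  have hn1 : (n:ℚ) - 1 ≠ 0 := by linarith
  have hg : 2 * (α:ℚ) - 1 + ((n:ℚ) - 1) * 2 ≠ 0 := by linarith
  field_simp
  ring

lemma mid_pair (n : ℕ) (hn : 3 ≤ n) (q : PP) :
    (∑ s ∈ Finset.range (2*n-2), (4:ℚ) • pderiv ((false, s) : Bool × ℕ)
        (pderiv ((false, 2*n-2-1-s) : Bool × ℕ) q))
      = ∑ α ∈ Finset.Icc 1 (n-1), (8:ℚ) • pderiv ((false, n + α - 2) : Bool × ℕ)
          (pderiv ((false, n - α - 1) : Bool × ℕ) q) := by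
  have hsplit : Finset.range (2*n-2) = Finset.Ico 0 (n-1) ∪ Finset.Ico (n-1) (2*n-2) := by
    rw [Finset.Ico_union_Ico_eq_Ico (by omega) (by omega), ← Finset.range_eq_Ico]
  have hdis : Disjoint (Finset.Ico 0 (n-1)) (Finset.Ico (n-1) (2*n-2)) := by
    rw [Finset.disjoint_left]
    intro x hx hx2
    simp only [Finset.mem_Ico] at hx hx2
    omega
  rw [hsplit, Finset.sum_union hdis]
  have part1 : (∑ s ∈ Finset.Ico 0 (n-1), (4:ℚ) • pderiv ((false, s) : Bool × ℕ)
      (pderiv ((false, 2*n-2-1-s) : Bool × ℕ) q))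
      = ∑ α ∈ Finset.Icc 1 (n-1), (4:ℚ) • pderiv ((false, n + α - 2) : Bool × ℕ)
          (pderiv ((false, n - α - 1) : Bool × ℕ) q) := by
    apply Finset.sum_nbij' (i := fun s => n - 1 - s) (j := fun α => n - 1 - α)
    · intro s hs
      simp only [Finset.mem_Ico] at hs
      simp only [Finset.mem_Icc]
      omega
    · intro α hα
      simp only [Finset.mem_Icc] at hα
      simp only [Finset.mem_Ico]
      omega
    · intro s hs
      simp only [Finset.mem_Ico] at hs
      omega
    · intro α hα
      simp only [Finset.mem_Icc] at hα
      omega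
    · intro s hs
      simp only [Finset.mem_Ico] at hs
      have e1 : n + (n-1-s) - 2 = 2*n-2-1-s := by omega
      have e2 : n - (n-1-s) - 1 = s := by omega
      rw [e1, e2, pderiv_comm']
  have part2 : (∑ s ∈ Finset.Ico (n-1) (2*n-2), (4:ℚ) • pderiv ((false, s) : Bool × ℕ)
      (pderiv ((false, 2*n-2-1-s) : Bool × ℕ) q))
      = ∑ α ∈ Finset.Icc 1 (n-1), (4:ℚ) • pderiv ((false, n + α - 2) : Bool × ℕ)
          (pderiv ((false, n - α - 1) : Bool × ℕ) q) := by
    apply Finset.sum_nbij' (i := fun s => s - (n-2)) (j := fun α => n + α - 2)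
    · intro s hs
      simp only [Finset.mem_Ico] at hs
      simp only [Finset.mem_Icc]
      omega
    · intro α hα
      simp only [Finset.mem_Icc] at hα
      simp only [Finset.mem_Ico]
      omega
    · intro s hs
      simp only [Finset.mem_Ico] at hs
      omega
    · intro α hα
      simp only [Finset.mem_Icc] at hα
      omega
    · intro s hs
      simp only [Finset.mem_Ico] at hs
      have e1 : n + (s - (n-2)) - 2 = s := by omega
      have e2 : n - (s - (n-2)) - 1 = 2*n-2-1-s := by omega
      rw [e1, e2]
  rw [part1, part2, ← Finset.sum_add_distrib]
  apply Finset.sum_congr rfl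
  intro α _
  rw [← add_smul]
  norm_num

/-- the Virasoro operator
`L_2 = Σ_α Σ_{p≥0} (p+1/2+μ_α)(p+3/2+μ_α)(p+5/2+μ_α)·T^{α,p}∘∂_{α,p+2}
+ Σ_{α,β} η^{αβ}·(1/2-μ_α)(1/2-μ_β)(3/2-μ_β)·∂_{α,1}∘∂_{β,0}`
of the Frobenius manifold of the Coxeter group `D_n` equals `V_2`. -/
theorem L_two_eq_V_two (n : ℕ) (hn : 3 ≤ n) (q : PP) :
    (∑ α ∈ Finset.Icc 1 n, ∑ᶠ p : ℕ,
        (((p : ℚ) + 1 / 2 + mu n α) * ((p : ℚ) + 3 / 2 + mu n α) *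
            ((p : ℚ) + 5 / 2 + mu n α)) •
          Tmul n α p (Dop n α (p + 2) q))
      + ∑ α ∈ Finset.Icc 1 n, ∑ β ∈ Finset.Icc 1 n,
          (etaInv n α β * (1 / 2 - mu n α) * (1 / 2 - mu n β) * (3 / 2 - mu n β)) •
            Dop n α 1 (Dop n β 0 q)
      = Vop n 2 q := by
  have hq := Ncast n hn
  have hIcc : Finset.Icc 1 n = insert n (Finset.Icc 1 (n-1)) := by
    ext x
    simp only [Finset.mem_Icc, Finset.mem_insert]
    omega
  have hnot : n ∉ Finset.Icc 1 (n-1) := by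
    simp only [Finset.mem_Icc]
    omega
  have sum1 : (∑ α ∈ Finset.Icc 1 n, ∑ᶠ p : ℕ,
        (((p : ℚ) + 1 / 2 + mu n α) * ((p : ℚ) + 3 / 2 + mu n α) *
            ((p : ℚ) + 5 / 2 + mu n α)) •
          Tmul n α p (Dop n α (p + 2) q))
      = (∑ j ∈ Finset.range (dBound q + 1), ((2 * (j : ℚ) + 1) / 2) • XD true 2 q j)
        + ∑ j ∈ Finset.range (dBound q + 1),
            ((2 * (j : ℚ) + 1) / (2 * (n:ℚ) - 2)) • XD false (2*n-2) q j := by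
    rw [hIcc, Finset.sum_insert hnot, sum_term_n n q, sum_term_a n hn q]
  have sum2 : (∑ α ∈ Finset.Icc 1 n, ∑ β ∈ Finset.Icc 1 n,
        (etaInv n α β * (1 / 2 - mu n α) * (1 / 2 - mu n β) * (3 / 2 - mu n β)) •
          Dop n α 1 (Dop n β 0 q))
      = pderiv ((true, 1) : Bool × ℕ) (pderiv ((true, 0) : Bool × ℕ) q)
        + ∑ α ∈ Finset.Icc 1 (n-1), ((n:ℚ) - 1)⁻¹ •
            pderiv ((false, n + α - 2) : Bool × ℕ) (pderiv ((false, n - α - 1) : Bool × ℕ) q) := by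
    have step : ∀ α ∈ Finset.Icc 1 n, (∑ β ∈ Finset.Icc 1 n,
        (etaInv n α β * (1 / 2 - mu n α) * (1 / 2 - mu n β) * (3 / 2 - mu n β)) •
          Dop n α 1 (Dop n β 0 q))
        = if α = n then pderiv ((true, 1) : Bool × ℕ) (pderiv ((true, 0) : Bool × ℕ) q)
          else ((n:ℚ) - 1)⁻¹ •
            pderiv ((false, n + α - 2) : Bool × ℕ) (pderiv ((false, n - α - 1) : Bool × ℕ) q) := by
      intro α hα
      obtain ⟨h1, h2⟩ := Finset.mem_Icc.1 hα
      by_cases h : α = n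
      · rw [h, if_pos rfl]
        exact eta_nn n hn q
      · rw [if_neg h]
        exact eta_a n α hn h1 (by omega) q
    rw [Finset.sum_congr rfl step, hIcc, Finset.sum_insert hnot, if_pos rfl]
    congr 1
    refine Finset.sum_congr rfl fun α hα => ?_
    rw [if_neg (by have := Finset.mem_Icc.1 hα; omega)]
  rw [sum1, sum2]
  unfold Vop
  rw [if_neg (by norm_num), zero_smul, add_zero]
  have hfe : (fun i : ℤ => nord false i ((2 * (n:ℤ) - 2) * 2 - i) q)
      = fun i : ℤ => nord false i (2 * ((2*n-2 : ℕ) : ℤ) - i) q := by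
    funext i
    have e : (2 * (n:ℤ) - 2) * 2 - i = 2 * ((2*n-2 : ℕ) : ℤ) - i := by
      have h : ((2*n-2 : ℕ) : ℤ) = 2 * (n:ℤ) - 2 := by omega
      rw [h]; ring
    rw [e]
  have hte : (fun i : ℤ => nord true i (2 * 2 - i) q)
      = fun i : ℤ => nord true i (2 * ((2 : ℕ) : ℤ) - i) q := by
    funext i
    norm_num
  rw [hfe, hte, finsum_nord false (2*n-2) (by omega) q, finsum_nord true 2 (by omega) q]
  rw [smul_add, smul_add]
  have p1 : (8*(n:ℚ)-8)⁻¹ • (∑ j ∈ Finset.range (dBound q + 1),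
      (4*(2*(j:ℚ)+1)) • XD false (2*n-2) q j)
      = ∑ j ∈ Finset.range (dBound q + 1),
          ((2*(j:ℚ)+1)/(2*(n:ℚ)-2)) • XD false (2*n-2) q j := by
    rw [Finset.smul_sum]
    refine Finset.sum_congr rfl fun j _ => ?_
    rw [smul_smul]
    congr 1
    have h8 : (8*(n:ℚ)-8) ≠ 0 := by linarith
    have hN : (2*(n:ℚ)-2) ≠ 0 := by linarith
    field_simp
    ring
  have p2 : (8:ℚ)⁻¹ • (∑ j ∈ Finset.range (dBound q + 1), (4*(2*(j:ℚ)+1)) • XD true 2 q j)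
      = ∑ j ∈ Finset.range (dBound q + 1), ((2*(j:ℚ)+1)/2) • XD true 2 q j := by
    rw [Finset.smul_sum]
    refine Finset.sum_congr rfl fun j _ => ?_
    rw [smul_smul]
    congr 1
    ring
  have p3 : (8*(n:ℚ)-8)⁻¹ • (∑ s ∈ Finset.range (2*n-2),
      (4:ℚ) • pderiv ((false, s) : Bool × ℕ) (pderiv ((false, 2*n-2-1-s) : Bool × ℕ) q))
      = ∑ α ∈ Finset.Icc 1 (n-1), ((n:ℚ) - 1)⁻¹ •
          pderiv ((false, n + α - 2) : Bool × ℕ) (pderiv ((false, n - α - 1) : Bool × ℕ) q) := by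
    rw [mid_pair n hn q, Finset.smul_sum]
    refine Finset.sum_congr rfl fun α _ => ?_
    rw [smul_smul]
    congr 1
    have h8 : (8*(n:ℚ)-8) ≠ 0 := by linarith
    have h1 : ((n:ℚ)-1) ≠ 0 := by linarith
    field_simp
  have p4 : (8:ℚ)⁻¹ • (∑ s ∈ Finset.range 2,
      (4:ℚ) • pderiv ((true, s) : Bool × ℕ) (pderiv ((true, 2-1-s) : Bool × ℕ) q))
      = pderiv ((true, 1) : Bool × ℕ) (pderiv ((true, 0) : Bool × ℕ) q) := by
    rw [Finset.sum_range_succ, Finset.sum_range_one]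
    norm_num
    rw [pderiv_comm' ((true, 0) : Bool × ℕ) ((true, 1) : Bool × ℕ) q]
    rw [← add_smul, smul_smul]
    norm_num
  rw [p1, p2, p3, p4]
  abel


end
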